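/- Let D = (d₁, …, d_n) with d₁ ≥ d₂ ≥ ⋯ ≥ d_n > 0 and let f_D be the step function on [0,1) whose value on [(i-1)/n, i/n) is d_i. Then the first slide derivative of f_D is ψ₁(f_D) = (1/n) Σ_{i=2}^{n-1} i·ln(i)·ln(d_{i+1}/d_i) + (ln(n)/n) Σ_{i=1}^{n-1} ln(d_i/d_n). -/

import Mathlib

open MeasureTheory

/-- The slide function `σ_f(t)` of a function `f` on `(0,b)`:
`σ_f(t) = -1 - ∫₀^b (f(x)^t / A(t)) ln( x · f(x)^t / A(t) ) dx` where
`A(t) = ∫₀^b f(x)^t dx`. -/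
noncomputable def slideFun (b : ℝ) (f : ℝ → ℝ) (t : ℝ) : ℝ :=
  -1 - ∫ x in Set.Ioo (0:ℝ) b,
    (f x ^ t / ∫ y in Set.Ioo (0:ℝ) b, f y ^ t) *
      Real.log (x * (f x ^ t / ∫ y in Set.Ioo (0:ℝ) b, f y ^ t))

section Aux
open Real Filter Set Topology


lemma log_integrableOn_Ioo {b : ℝ} (hb : 0 < b) (hb1 : b ≤ 1) :
    IntegrableOn Real.log (Set.Ioo 0 b) := by
  have hg : IntegrableOn (fun x : ℝ => 2 * x ^ (-(1/2) : ℝ)) (Set.Ioo 0 b) := by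
    have h := intervalIntegral.intervalIntegrable_rpow' (a := 0) (b := b)
      (r := -(1/2)) (by norm_num)
    rw [intervalIntegrable_iff_integrableOn_Ioo_of_le hb.le] at h
    exact h.const_mul 2
  refine hg.integrable.mono Real.measurable_log.aestronglyMeasurable ?_
  filter_upwards [ae_restrict_mem measurableSet_Ioo] with x hx
  have hx0 : 0 < x := hx.1
  have hx1 : x ≤ 1 := hx.2.le.trans hb1
  have hrp : (0:ℝ) < x ^ (-(1/2) : ℝ) := rpow_pos_of_pos hx0 _
  have h1 : Real.log (x ^ (-(1/2) : ℝ)) = -(1/2) * Real.log x := Real.log_rpow hx0 _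
  have h2 : -(1/2) * Real.log x ≤ x ^ (-(1/2) : ℝ) :=
    h1 ▸ (Real.log_le_sub_one_of_pos hrp).trans (by linarith)
  have h3 : Real.log x ≤ 0 := Real.log_nonpos hx0.le hx1
  simp only [Real.norm_eq_abs]
  rw [abs_of_nonpos h3, abs_of_nonneg (by positivity)]
  linarith

lemma integral_log_Ioo {b : ℝ} (hb : 0 < b) (hb1 : b ≤ 1) :
    ∫ x in Set.Ioo (0:ℝ) b, Real.log x = b * Real.log b - b := by
  set s : ℕ → Set ℝ := fun k => Set.Ioo (b / (k + 2)) b with hs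
  have hsm : ∀ k, MeasurableSet (s k) := fun k => measurableSet_Ioo
  have hmono : Monotone s := by
    intro i j hij
    apply Set.Ioo_subset_Ioo _ le_rfl
    apply div_le_div_of_nonneg_left hb.le (by positivity)
    have : (i:ℝ) ≤ j := Nat.cast_le.mpr hij
    linarith
  have hunion : (⋃ k, s k) = Set.Ioo 0 b := by
    ext x
    simp only [hs, Set.mem_iUnion, Set.mem_Ioo]
    constructor
    · rintro ⟨k, h1, h2⟩
      exact ⟨lt_trans (by positivity) h1, h2⟩
    · rintro ⟨hx0, hxb⟩
      obtain ⟨k, hk⟩ := exists_nat_gt (b / x)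
      refine ⟨k, ?_, hxb⟩
      rw [div_lt_iff₀ (by positivity)]
      rw [div_lt_iff₀ hx0] at hk
      nlinarith
  have hint : IntegrableOn Real.log (⋃ k, s k) := by
    rw [hunion]; exact log_integrableOn_Ioo hb hb1
  have hT := MeasureTheory.tendsto_setIntegral_of_monotone hsm hmono hint
  rw [hunion] at hT
  have hval : ∀ k : ℕ, ∫ x in s k, Real.log x
      = b * Real.log b - b - ((b / (k + 2)) * Real.log (b / (k + 2)) - b / (k + 2)) := by
    intro k
    have hek : 0 < b / ((k:ℝ) + 2) := by positivity
    have hekb : b / ((k:ℝ) + 2) ≤ b := by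
      rw [div_le_iff₀ (by positivity)]
      nlinarith
    rw [← MeasureTheory.integral_Ioc_eq_integral_Ioo,
      ← intervalIntegral.integral_of_le hekb, integral_log]
    ring
  have hT2 : Tendsto (fun k : ℕ => b * Real.log b - b
      - ((b / (k + 2)) * Real.log (b / (k + 2)) - b / (k + 2))) atTop
      (𝓝 (∫ x in Set.Ioo (0:ℝ) b, Real.log x)) := by
    refine hT.congr fun k => (hval k)
  -- compute the limit of the explicit sequence
  have heps : Tendsto (fun k : ℕ => b / ((k:ℝ) + 2)) atTop (𝓝[>] 0) := by
    rw [tendsto_nhdsWithin_iff]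
    constructor
    · exact Tendsto.div_atTop tendsto_const_nhds (tendsto_atTop_add_const_right _ 2
        tendsto_natCast_atTop_atTop)
    · exact Eventually.of_forall fun k => Set.mem_Ioi.mpr (by positivity)
  have hlim1 : Tendsto (fun k : ℕ => (b / ((k:ℝ) + 2)) * Real.log (b / ((k:ℝ) + 2)))
      atTop (𝓝 0) := by
    have := (tendsto_log_mul_rpow_nhdsGT_zero (r := 1) one_pos).comp heps
    simp only [Function.comp_def, rpow_one] at this
    exact this.congr fun k => by ring
  have hlim0 : Tendsto (fun k : ℕ => b / ((k:ℝ) + 2)) atTop (𝓝 0) :=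
    heps.mono_right nhdsWithin_le_nhds
  have hT3 : Tendsto (fun k : ℕ => b * Real.log b - b
      - ((b / (k + 2)) * Real.log (b / (k + 2)) - b / (k + 2))) atTop
      (𝓝 (b * Real.log b - b - (0 - 0))) :=
    tendsto_const_nhds.sub (hlim1.sub hlim0)
  have := tendsto_nhds_unique hT2 hT3
  rw [this]; ring

lemma log_II {a b : ℝ} (ha : 0 ≤ a) (hab : a < b) (hb1 : b ≤ 1) :
    IntegrableOn Real.log (Set.Ioo a b) ∧
      ∫ x in Set.Ioo a b, Real.log x = b * Real.log b - a * Real.log a - (b - a) := by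
  have hb : 0 < b := lt_of_le_of_lt ha hab
  rcases eq_or_lt_of_le ha with h0 | h0
  · subst h0
    refine ⟨log_integrableOn_Ioo hb hb1, ?_⟩
    rw [integral_log_Ioo hb hb1]
    simp [Real.log_zero]
  · have h1 : IntervalIntegrable Real.log volume a b :=
      intervalIntegral.intervalIntegrable_log (by
        rw [Set.uIcc_of_le hab.le]
        rintro ⟨h2, -⟩
        exact absurd h2 (not_le.mpr h0))
    constructor
    · rwa [intervalIntegrable_iff_integrableOn_Ioo_of_le hab.le] at h1
    · rw [← MeasureTheory.integral_Ioc_eq_integral_Ioo,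
        ← intervalIntegral.integral_of_le hab.le, integral_log]
      ring

lemma piece_eval {a b v : ℝ} (hab : a ≤ b) {g : ℝ → ℝ} (h : ∀ x ∈ Set.Ioo a b, g x = v) :
    IntervalIntegrable g volume a b ∧ ∫ x in Set.Ioo a b, g x = (b - a) * v := by
  have hmeas : MeasurableSet (Set.Ioo a b) := measurableSet_Ioo
  have hvol : volume (Set.Ioo a b) < ⊤ := by
    rw [Real.volume_Ioo]; exact ENNReal.ofReal_lt_top
  have hconst : IntegrableOn (fun _ : ℝ => v) (Set.Ioo a b) := integrableOn_const hvol.ne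
  have hint : IntegrableOn g (Set.Ioo a b) :=
    hconst.congr_fun (fun x hx => (h x hx).symm) hmeas
  constructor
  · rwa [intervalIntegrable_iff_integrableOn_Ioo_of_le hab]
  · rw [MeasureTheory.setIntegral_congr_fun hmeas h, setIntegral_const, measureReal_def, Real.volume_Ioo,
      smul_eq_mul, ENNReal.toReal_ofReal (sub_nonneg.mpr hab)]

lemma piece_eval_log {a b c : ℝ} (ha : 0 ≤ a) (hab : a < b) (hb1 : b ≤ 1) {g : ℝ → ℝ}
    (h : ∀ x ∈ Set.Ioo a b, g x = c * Real.log x + c * Real.log c) :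
    IntervalIntegrable g volume a b ∧
      ∫ x in Set.Ioo a b, g x
        = c * (b * Real.log b - a * Real.log a - (b - a)) + (b - a) * (c * Real.log c) := by
  obtain ⟨hli, hlv⟩ := log_II ha hab hb1
  have hmeas : MeasurableSet (Set.Ioo a b) := measurableSet_Ioo
  have hvol : volume (Set.Ioo a b) < ⊤ := by
    rw [Real.volume_Ioo]; exact ENNReal.ofReal_lt_top
  have hconst : IntegrableOn (fun _ : ℝ => c * Real.log c) (Set.Ioo a b) :=
    integrableOn_const hvol.ne
  have hf : IntegrableOn (fun x => c * Real.log x + c * Real.log c) (Set.Ioo a b) :=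
    (hli.const_mul c).add hconst
  have hint : IntegrableOn g (Set.Ioo a b) :=
    hf.congr_fun (fun x hx => (h x hx).symm) hmeas
  constructor
  · rwa [intervalIntegrable_iff_integrableOn_Ioo_of_le hab.le]
  · rw [MeasureTheory.setIntegral_congr_fun hmeas h,
      MeasureTheory.integral_add (hli.const_mul c) hconst,
      MeasureTheory.integral_const_mul, hlv, setIntegral_const, measureReal_def, Real.volume_Ioo,
      smul_eq_mul, ENNReal.toReal_ofReal (sub_nonneg.mpr hab.le)]


lemma abel_sum (e B : ℕ → ℝ) (hB0 : B 0 = 0) :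
    ∀ n, 1 ≤ n → ∑ i ∈ Finset.Icc 1 n, e i * (B i - B (i-1))
      = e n * B n - ∑ i ∈ Finset.Icc 1 (n-1), (e (i+1) - e i) * B i := by
  intro n hn
  induction n, hn using Nat.le_induction with
  | base => simp [hB0]
  | succ n hn ih =>
    rw [Finset.sum_Icc_succ_top (by omega : 1 ≤ n + 1), ih]
    have h1 : n + 1 - 1 = n := by omega
    have h2 : n - 1 + 1 = n := by omega
    rw [h1, ← h2, Finset.sum_Icc_succ_top (by omega : 1 ≤ n - 1 + 1), h2]
    ring

lemma sum_shift (a : ℕ → ℝ) :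
    ∀ (n : ℕ), 1 ≤ n → ∑ i ∈ Finset.Icc 1 (n-1), (i:ℝ) * (a (i+1) - a i)
      = ((n:ℝ)-1) * a n - ∑ i ∈ Finset.Icc 1 (n-1), a i := by
  intro n hn
  induction n, hn using Nat.le_induction with
  | base => simp
  | succ n hn ih =>
    have h1 : n + 1 - 1 = n := by omega
    have h2 : n - 1 + 1 = n := by omega
    rw [h1, ← h2, Finset.sum_Icc_succ_top (by omega : 1 ≤ n - 1 + 1),
      Finset.sum_Icc_succ_top (by omega : 1 ≤ n - 1 + 1), h2, ih]
    push_cast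
    ring

lemma split_unit_integral (n : ℕ) (hn : 0 < n) (g : ℝ → ℝ) (v : ℕ → ℝ)
    (hpc : ∀ k, k < n → IntervalIntegrable g volume ((k:ℝ)/n) (((k:ℝ)+1)/n)
      ∧ ∫ x in Set.Ioo ((k:ℝ)/n) (((k:ℝ)+1)/n), g x = v k) :
    ∫ x in Set.Ioo (0:ℝ) 1, g x = ∑ k ∈ Finset.range n, v k := by
  have hn0 : (n:ℝ) ≠ 0 := Nat.cast_ne_zero.mpr hn.ne'
  have hnpos : (0:ℝ) < n := Nat.cast_pos.mpr hn
  set a : ℕ → ℝ := fun k => k / n with ha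
  have hcast : ∀ k : ℕ, a (k+1) = ((k:ℝ)+1)/n := by
    intro k; simp only [ha]; push_cast; ring
  have hle : ∀ k : ℕ, a k ≤ a (k+1) := by
    intro k; rw [hcast k]; simp only [ha]
    gcongr
    linarith
  have hint : ∀ k < n, IntervalIntegrable g volume (a k) (a (k+1)) := by
    intro k hk; rw [hcast k]; exact (hpc k hk).1
  have hsum := intervalIntegral.sum_integral_adjacent_intervals hint
  have h0 : a 0 = 0 := by simp [ha]
  have h1 : a n = 1 := by simp only [ha]; field_simp
  rw [h0, h1] at hsum
  have hIoo : ∫ x in Set.Ioo (0:ℝ) 1, g x = ∫ x in (0:ℝ)..1, g x := by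
    rw [intervalIntegral.integral_of_le zero_le_one,
      MeasureTheory.integral_Ioc_eq_integral_Ioo]
  rw [hIoo, ← hsum]
  apply Finset.sum_congr rfl
  intro k hk
  rw [intervalIntegral.integral_of_le (hle k),
    MeasureTheory.integral_Ioc_eq_integral_Ioo, hcast k]
  exact (hpc k (Finset.mem_range.mp hk)).2

end Aux

section Main
open Real Filter Set Topology

/-- For `d₁ ≥ d₂ ≥ ⋯ ≥ d_n > 0`, let `f_D` be the step function on
`[0,1)` with value `d_i` on `[(i-1)/n, i/n)`.  Then the first slide derivative of `f_D`
(the right-hand derivative of `σ_{f_D}` at `0`) equals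
`(1/n) Σ_{i=2}^{n-1} i ln(i) ln(d_{i+1}/d_i) + (ln(n)/n) Σ_{i=1}^{n-1} ln(d_i/d_n)`. -/
theorem first_slide_derivative_step (n : ℕ) (hn : 0 < n) (d : ℕ → ℝ)
    (hmono : ∀ i j, 1 ≤ i → i ≤ j → j ≤ n → d j ≤ d i)
    (hpos : ∀ i, 1 ≤ i → i ≤ n → 0 < d i)
    (fD : ℝ → ℝ)
    (hfD : ∀ i, 1 ≤ i → i ≤ n →
      ∀ x ∈ Set.Ico (((i:ℝ) - 1) / n) ((i:ℝ) / n), fD x = d i) :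
    HasDerivWithinAt (slideFun 1 fD)
      ((1 / n) * ∑ i ∈ Finset.Icc 2 (n - 1), (i : ℝ) * Real.log i * Real.log (d (i + 1) / d i)
        + (Real.log n / n) * ∑ i ∈ Finset.Icc 1 (n - 1), Real.log (d i / d n))
      (Set.Ici 0) 0 := by
  have hn0 : (n:ℝ) ≠ 0 := Nat.cast_ne_zero.mpr hn.ne'
  have hnpos : (0:ℝ) < n := Nat.cast_pos.mpr hn
  -- basic objects
  set S : ℝ → ℝ := fun t => ∑ i ∈ Finset.Icc 1 n, d i ^ t with hS
  have hSpos : ∀ t, 0 < S t := by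
    intro t
    apply Finset.sum_pos
    · intro i hi
      obtain ⟨h1, h2⟩ := Finset.mem_Icc.mp hi
      exact Real.rpow_pos_of_pos (hpos i h1 h2) t
    · exact Finset.nonempty_Icc.mpr hn
  set c : ℕ → ℝ → ℝ := fun i t => d i ^ t / (S t / n) with hc
  have hcpos : ∀ i, 1 ≤ i → i ≤ n → ∀ t, 0 < c i t := by
    intro i h1 h2 t
    exact div_pos (Real.rpow_pos_of_pos (hpos i h1 h2) t) (div_pos (hSpos t) hnpos)
  set K : ℕ → ℝ := fun i => ((i:ℝ)/n) * Real.log ((i:ℝ)/n)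
      - (((i:ℝ)-1)/n) * Real.log (((i:ℝ)-1)/n) - 1/n with hK
  set F : ℝ → ℝ := fun t => -1 - ∑ i ∈ Finset.Icc 1 n,
      (c i t * K i + (1/n) * (c i t * Real.log (c i t))) with hF
  -- value of fD on pieces
  have hfDval : ∀ k, k < n → ∀ x ∈ Set.Ioo ((k:ℝ)/n) (((k:ℝ)+1)/n), fD x = d (k+1) := by
    intro k hk x hx
    apply hfD (k+1) (by omega) (by omega)
    have h1 : ((k+1:ℕ):ℝ) - 1 = (k:ℝ) := by push_cast; ring
    have h2 : ((k+1:ℕ):ℝ) = (k:ℝ)+1 := by push_cast; ring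
    rw [h1, h2]
    exact ⟨hx.1.le, hx.2⟩
  have hab : ∀ k : ℕ, ((k:ℝ)/n) < (((k:ℝ)+1)/n) := by
    intro k
    rw [div_lt_div_iff₀ hnpos hnpos]
    nlinarith [hnpos, Nat.cast_nonneg (α := ℝ) k]
  -- A(t) = S t / n
  have hA : ∀ t : ℝ, (∫ y in Set.Ioo (0:ℝ) 1, fD y ^ t) = S t / n := by
    intro t
    rw [split_unit_integral n hn _ (fun k => (1/n) * d (k+1) ^ t) ?_]
    · simp only [hS]
      rw [← Finset.Ico_add_one_right_eq_Icc, Finset.sum_Ico_eq_sum_range, Nat.add_sub_cancel,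
        Finset.sum_div]
      apply Finset.sum_congr rfl
      intro k _
      rw [Nat.add_comm 1 k]
      ring
    · intro k hk
      have h := piece_eval (hab k).le
        (g := fun x => fD x ^ t) (v := d (k+1) ^ t)
        (fun x hx => by show fD x ^ t = _; rw [hfDval k hk x hx])
      refine ⟨h.1, ?_⟩
      rw [h.2]; ring
  -- entropy integral
  have hEnt : ∀ t : ℝ, (∫ x in Set.Ioo (0:ℝ) 1,
        (fD x ^ t / (S t / n)) * Real.log (x * (fD x ^ t / (S t / n))))
      = ∑ i ∈ Finset.Icc 1 n, (c i t * K i + (1/n) * (c i t * Real.log (c i t))) := by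
    intro t
    rw [split_unit_integral n hn _
      (fun k => c (k+1) t * K (k+1) + (1/n) * (c (k+1) t * Real.log (c (k+1) t))) ?_]
    · rw [← Finset.Ico_add_one_right_eq_Icc, Finset.sum_Ico_eq_sum_range, Nat.add_sub_cancel]
      apply Finset.sum_congr rfl
      intro k _
      rw [Nat.add_comm 1 k]
    · intro k hk
      have hc1 : 0 < c (k+1) t := hcpos (k+1) (by omega) (by omega) t
      have ha0 : 0 ≤ (k:ℝ)/n := by positivity
      have hb1 : ((k:ℝ)+1)/n ≤ 1 := by
        rw [div_le_one hnpos]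
        have : (k:ℝ)+1 ≤ n := by exact_mod_cast Nat.succ_le_of_lt hk
        linarith
      have h := piece_eval_log ha0 (hab k) hb1
        (g := fun x => (fD x ^ t / (S t / n)) * Real.log (x * (fD x ^ t / (S t / n))))
        (c := c (k+1) t) ?_
      · refine ⟨h.1, ?_⟩
        rw [h.2, hK]
        have h2 : ((k+1:ℕ):ℝ) = (k:ℝ)+1 := by push_cast; ring
        simp only [h2]
        ring
      · intro x hx
        have hx0 : 0 < x := lt_of_le_of_lt ha0 hx.1
        have hcc : 0 < d (k+1) ^ t / (S t / (n:ℝ)) := hc1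
        show (fD x ^ t / (S t / (n:ℝ))) * Real.log (x * (fD x ^ t / (S t / (n:ℝ))))
          = c (k+1) t * Real.log x + c (k+1) t * Real.log (c (k+1) t)
        rw [hfDval k hk x hx]
        show _ = (d (k+1) ^ t / (S t / (n:ℝ))) * Real.log x
          + (d (k+1) ^ t / (S t / (n:ℝ))) * Real.log (d (k+1) ^ t / (S t / (n:ℝ)))
        rw [Real.log_mul hx0.ne' hcc.ne']
        ring
  -- slideFun = F
  have hslide : slideFun 1 fD = F := by
    funext t
    simp only [slideFun]
    rw [hA t, hEnt t, hF]
  -- derivative of S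
  set E : ℝ := ∑ i ∈ Finset.Icc 1 n, Real.log (d i) with hE
  have hS0 : S 0 = n := by
    rw [hS]
    simp [Real.rpow_zero, Finset.sum_const, Nat.card_Icc]
  have hSn1 : S 0 / (n:ℝ) = 1 := by rw [hS0]; field_simp
  have hSd : HasDerivAt S E 0 := by
    rw [hS, hE]
    apply HasDerivAt.fun_sum
    intro i hi
    obtain ⟨h1, h2⟩ := Finset.mem_Icc.mp hi
    have h := (Real.hasStrictDerivAt_const_rpow (hpos i h1 h2) 0).hasDerivAt
    simpa [Real.rpow_zero] using h
  -- derivative of c i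
  have hcd : ∀ i, 1 ≤ i → i ≤ n →
      HasDerivAt (c i) (Real.log (d i) - E/n) 0 := by
    intro i h1 h2
    have hu : HasDerivAt (fun t : ℝ => d i ^ t) (Real.log (d i)) 0 := by
      have h := (Real.hasStrictDerivAt_const_rpow (hpos i h1 h2) 0).hasDerivAt
      simpa [Real.rpow_zero] using h
    have hw : HasDerivAt (fun t => S t / n) (E/n) 0 := hSd.div_const n
    have hw0 : S 0 / (n:ℝ) ≠ 0 := by rw [hSn1]; norm_num
    have h := hu.fun_div hw hw0
    rw [hc]
    refine h.congr_deriv ?_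
    rw [hSn1]
    simp [Real.rpow_zero]
  -- derivative of each term
  have hterm : ∀ i ∈ Finset.Icc 1 n,
      HasDerivAt (fun t => c i t * K i + (1/n) * (c i t * Real.log (c i t)))
        ((Real.log (d i) - E/n) * K i + (1/n) * (Real.log (d i) - E/n)) 0 := by
    intro i hi
    obtain ⟨h1, h2⟩ := Finset.mem_Icc.mp hi
    have hci := hcd i h1 h2
    have hc0 : c i 0 = 1 := by
      rw [hc]; simp only []
      rw [Real.rpow_zero, hSn1]; norm_num
    have part1 : HasDerivAt (fun t => c i t * K i) ((Real.log (d i) - E/n) * K i) 0 :=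
      hci.mul_const (K i)
    have hlog : HasDerivAt (fun t => Real.log (c i t))
        ((Real.log (d i) - E/n) / c i 0) 0 := hci.log (by rw [hc0]; norm_num)
    have part2 : HasDerivAt (fun t => c i t * Real.log (c i t))
        (Real.log (d i) - E/n) 0 := by
      have h := hci.fun_mul hlog
      refine h.congr_deriv ?_
      rw [hc0, Real.log_one]
      ring
    exact part1.add (part2.const_mul ((1:ℝ)/n))
  have hFd : HasDerivAt F
      (-(∑ i ∈ Finset.Icc 1 n,
        ((Real.log (d i) - E/n) * K i + (1/n) * (Real.log (d i) - E/n)))) 0 := by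
    rw [hF]
    have h := (hasDerivAt_const (0:ℝ) (-1:ℝ)).fun_sub (HasDerivAt.fun_sum hterm)
    simpa using h
  -- the value identity
  have hval : -(∑ i ∈ Finset.Icc 1 n,
        ((Real.log (d i) - E/n) * K i + (1/n) * (Real.log (d i) - E/n)))
      = (1 / n) * ∑ i ∈ Finset.Icc 2 (n - 1), (i : ℝ) * Real.log i * Real.log (d (i + 1) / d i)
        + (Real.log n / n) * ∑ i ∈ Finset.Icc 1 (n - 1), Real.log (d i / d n) := by
    set B : ℕ → ℝ := fun j => ((j:ℝ)/n) * Real.log ((j:ℝ)/n) with hB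
    set e : ℕ → ℝ := fun i => Real.log (d i) - E/n with he
    have step1 : ∑ i ∈ Finset.Icc 1 n,
        ((Real.log (d i) - E/n) * K i + (1/n) * (Real.log (d i) - E/n))
        = ∑ i ∈ Finset.Icc 1 n, e i * (B i - B (i-1)) := by
      apply Finset.sum_congr rfl
      intro i hi
      obtain ⟨h1, h2⟩ := Finset.mem_Icc.mp hi
      have hcast : ((i-1:ℕ):ℝ) = (i:ℝ) - 1 := by
        rw [Nat.cast_sub h1]; norm_num
      rw [he, hB, hK]
      simp only [hcast]
      ring
    have hB0 : B 0 = 0 := by rw [hB]; simp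
    have hBn : B n = 0 := by
      rw [hB]; simp only [div_self hn0, Real.log_one]; ring
    rw [step1, abel_sum e B hB0 n hn, hBn]
    have hdelta : ∀ i, e (i+1) - e i = Real.log (d (i+1)) - Real.log (d i) := by
      intro i; rw [he]; ring
    -- split into two sums
    have step2 : ∑ i ∈ Finset.Icc 1 (n-1), (e (i+1) - e i) * B i
        = (1/(n:ℝ)) * ∑ i ∈ Finset.Icc 1 (n-1),
            (i:ℝ) * Real.log i * (Real.log (d (i+1)) - Real.log (d i))
          - (Real.log n/(n:ℝ)) * ∑ i ∈ Finset.Icc 1 (n-1),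
            (i:ℝ) * (Real.log (d (i+1)) - Real.log (d i)) := by
      rw [Finset.mul_sum, Finset.mul_sum, ← Finset.sum_sub_distrib]
      apply Finset.sum_congr rfl
      intro i hi
      obtain ⟨h1, h2⟩ := Finset.mem_Icc.mp hi
      have hi0 : ((i:ℝ)) ≠ 0 := by
        have : (0:ℝ) < i := by exact_mod_cast h1
        exact this.ne'
      rw [hdelta i, hB]
      simp only []
      rw [Real.log_div hi0 hn0]
      ring
    rw [step2]
    -- first sum: drop i = 1 and rewrite logs
    have first : ∑ i ∈ Finset.Icc 1 (n-1),
          (i:ℝ) * Real.log i * (Real.log (d (i+1)) - Real.log (d i))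
        = ∑ i ∈ Finset.Icc 2 (n - 1), (i : ℝ) * Real.log i * Real.log (d (i + 1) / d i) := by
      rw [← Finset.sum_subset (Finset.Icc_subset_Icc_left (by norm_num : 1 ≤ 2)) ?_]
      · apply Finset.sum_congr rfl
        intro i hi
        obtain ⟨h1, h2⟩ := Finset.mem_Icc.mp hi
        have hin : i ≤ n - 1 := h2
        have hi1 : 1 ≤ i := by omega
        have hin : i ≤ n := by omega
        have hi1n : i + 1 ≤ n := by omega
        rw [Real.log_div (hpos (i+1) (by omega) hi1n).ne' (hpos i hi1 hin).ne']
      · intro x hx hnx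
        obtain ⟨h1, h2⟩ := Finset.mem_Icc.mp hx
        have : x = 1 := by
          rcases Finset.mem_Icc.not.mp hnx with h
          omega
        rw [this]
        simp
    -- second sum
    have second : ∑ i ∈ Finset.Icc 1 (n-1), (i:ℝ) * (Real.log (d (i+1)) - Real.log (d i))
        = ((n:ℝ)-1) * Real.log (d n) - ∑ i ∈ Finset.Icc 1 (n-1), Real.log (d i) :=
      sum_shift (fun i => Real.log (d i)) n hn
    have third : ∑ i ∈ Finset.Icc 1 (n - 1), Real.log (d i / d n)
        = (∑ i ∈ Finset.Icc 1 (n-1), Real.log (d i)) - ((n:ℝ)-1) * Real.log (d n) := by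
      have : ∀ i ∈ Finset.Icc 1 (n-1), Real.log (d i / d n)
          = Real.log (d i) - Real.log (d n) := by
        intro i hi
        obtain ⟨h1, h2⟩ := Finset.mem_Icc.mp hi
        exact Real.log_div (hpos i h1 (by omega)).ne' (hpos n hn le_rfl).ne'
      rw [Finset.sum_congr rfl this, Finset.sum_sub_distrib, Finset.sum_const,
        Nat.card_Icc]
      have hcard : (n - 1 + 1 - 1 : ℕ) = n - 1 := by omega
      have : ((n-1:ℕ):ℝ) = (n:ℝ) - 1 := by
        rw [Nat.cast_sub hn]; norm_num
      rw [hcard, nsmul_eq_mul, this]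
    rw [first, second, third]
    ring
  rw [hslide, ← hval]
  exact hFd.hasDerivWithinAt

end Main
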